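/- Let v be monic irreducible of degree d in 𝔽_q[θ]. Then D_{n,v}/D_{n-1,v}^q equals (θ^{q^n} − θ)/(θ^{q^{n-d}} − θ) if n > d, equals (θ^{q^n} − θ)/v if n = d, and equals θ^{q^n} − θ if 0 < n < d. -/

import Mathlib

open Polynomial Finset UniqueFactorizationMonoid

namespace CarlitzDnv

variable {F : Type*} [Field F] [Fintype F]

set_option linter.unusedSectionVars false
set_option linter.unusedVariables false
set_option maxHeartbeats 1600000

open scoped Classical

noncomputable def emb (n : ℕ) (c : Fin n → F) : F[X] :=
  X ^ n + ∑ j : Fin n, C (c j) * X ^ (j : ℕ)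

theorem emb_coeff (n : ℕ) (c : Fin n → F) (k : ℕ) :
    (emb n c).coeff k = (if k = n then 1 else 0) + (if h : k < n then c ⟨k, h⟩ else 0) := by
  have h1 : (X ^ n : F[X]).coeff k = if k = n then 1 else 0 := by
    rw [coeff_X_pow]
  rw [emb, coeff_add, h1, finset_sum_coeff]
  congr 1
  simp only [coeff_C_mul, coeff_X_pow, mul_ite, mul_one, mul_zero]
  by_cases h : k < n
  · rw [dif_pos h, Finset.sum_eq_single (⟨k, h⟩ : Fin n)]
    · simp
    · intro b _ hb
      rw [if_neg]
      exact fun hbk => hb (by ext; simp [hbk])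
    · simp
  · rw [dif_neg h, Finset.sum_eq_zero]
    intro b _
    rw [if_neg]
    exact fun hbk => h (hbk ▸ b.isLt)

theorem emb_degree_lt (n : ℕ) (c : Fin n → F) :
    (∑ j : Fin n, C (c j) * X ^ (j : ℕ)).degree < (X ^ n : F[X]).degree := by
  rw [degree_X_pow]
  refine lt_of_le_of_lt (degree_sum_le _ _) ?_
  rw [Finset.sup_lt_iff (by exact_mod_cast WithBot.bot_lt_coe n)]
  intro b _
  exact lt_of_le_of_lt (degree_C_mul_X_pow_le _ _) (by exact_mod_cast b.isLt)

theorem emb_monic (n : ℕ) (c : Fin n → F) : (emb n c).Monic :=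
  (monic_X_pow (R := F) n).add_of_left (emb_degree_lt n c)

theorem emb_ne_zero (n : ℕ) (c : Fin n → F) : emb n c ≠ 0 :=
  (emb_monic n c).ne_zero

theorem emb_natDegree (n : ℕ) (c : Fin n → F) : (emb n c).natDegree = n := by
  have h := degree_add_eq_left_of_degree_lt (emb_degree_lt n c)
  rw [degree_X_pow] at h
  exact natDegree_eq_of_degree_eq_some h

theorem emb_inj (n : ℕ) : Function.Injective (emb (F := F) n) := by
  intro a b hab
  funext j
  have := congrArg (fun f => Polynomial.coeff f (j : ℕ)) hab
  simpa [emb_coeff, j.isLt] using this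

theorem emb_eq_self {n : ℕ} {f : F[X]} (hf : f.Monic) (hdeg : f.natDegree = n) :
    emb n (fun j => f.coeff (j : ℕ)) = f := by
  ext k
  rw [emb_coeff]
  rcases lt_trichotomy k n with h | h | h
  · simp [h, h.ne]
  · subst h
    simp [← hdeg, hf.coeff_natDegree, (Nat.lt_irrefl k)]
  · rw [dif_neg (by omega), if_neg (by omega), add_zero, eq_comm]
    exact coeff_eq_zero_of_natDegree_lt (hdeg ▸ h)


noncomputable def Dall (F : Type*) [Field F] [Fintype F] (n : ℕ) : F[X] :=
  ∏ c : Fin n → F, emb n c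

theorem Dall_monic (n : ℕ) : (Dall F n).Monic :=
  monic_prod_of_monic _ _ fun c _ => emb_monic n c

theorem Dall_ne_zero (n : ℕ) : Dall F n ≠ 0 := (Dall_monic n).ne_zero

theorem Dall_zero : Dall F 0 = 1 := by
  rw [Dall]
  apply Finset.prod_eq_one
  intro c _
  simp [emb]


/-- the lift map: tuples of length `n - m` to tuples of length `n`, via mult by `g`. -/
noncomputable def lift (g : F[X]) (n m : ℕ) (c : Fin (n - m) → F) : Fin n → F :=
  fun j => (g * emb (n - m) c).coeff (j : ℕ)

theorem emb_lift {g : F[X]} (hg : g.Monic) {n m : ℕ} (hm : g.natDegree = m) (hmn : m ≤ n)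
    (c : Fin (n - m) → F) : emb n (lift g n m c) = g * emb (n - m) c := by
  apply emb_eq_self (hg.mul (emb_monic _ c))
  rw [natDegree_mul hg.ne_zero (emb_ne_zero _ c), hm, emb_natDegree]
  omega

theorem lift_inj {g : F[X]} (hg : g.Monic) {n m : ℕ} (hm : g.natDegree = m) (hmn : m ≤ n) :
    Function.Injective (lift (F := F) g n m) := by
  intro a b hab
  have : emb n (lift g n m a) = emb n (lift g n m b) := by rw [hab]
  rw [emb_lift hg hm hmn, emb_lift hg hm hmn] at this
  exact emb_inj _ (mul_left_cancel₀ hg.ne_zero this)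

theorem image_lift {g : F[X]} (hg : g.Monic) {n m : ℕ} (hm : g.natDegree = m) (hmn : m ≤ n) :
    Finset.image (lift g n m) Finset.univ
      = Finset.univ.filter (fun c : Fin n → F => g ∣ emb n c) := by
  ext c
  simp only [Finset.mem_image, Finset.mem_filter, Finset.mem_univ, true_and]
  constructor
  · rintro ⟨c', rfl⟩
    rw [emb_lift hg hm hmn]
    exact Dvd.intro _ rfl
  · rintro ⟨h, hh⟩
    have hhm : h.Monic := hg.of_mul_monic_left (hh ▸ emb_monic n c)
    have hhd : h.natDegree = n - m := by
      have := emb_natDegree n c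
      rw [hh, natDegree_mul hg.ne_zero hhm.ne_zero, hm] at this
      omega
    refine ⟨fun j => h.coeff (j : ℕ), ?_⟩
    apply emb_inj n
    rw [emb_lift hg hm hmn, emb_eq_self hhm hhd, ← hh]

theorem card_filter_dvd {g : F[X]} (hg : g.Monic) {n m : ℕ} (hm : g.natDegree = m) (hmn : m ≤ n) :
    (Finset.univ.filter (fun c : Fin n → F => g ∣ emb n c)).card
      = Fintype.card F ^ (n - m) := by
  rw [← image_lift hg hm hmn, Finset.card_image_of_injective _ (lift_inj hg hm hmn)]
  simp [Fintype.card_fun]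

theorem prod_filter_dvd {g : F[X]} (hg : g.Monic) {n m : ℕ} (hm : g.natDegree = m) (hmn : m ≤ n) :
    ∏ c ∈ Finset.univ.filter (fun c : Fin n → F => g ∣ emb n c), emb n c
      = g ^ (Fintype.card F ^ (n - m)) * Dall F (n - m) := by
  rw [← image_lift hg hm hmn, Finset.prod_image (fun a _ b _ h => lift_inj hg hm hmn h)]
  rw [show ∀ (s : Finset (Fin (n-m) → F)), ∏ c ∈ s, emb n (lift g n m c)
      = ∏ c ∈ s, (g * emb (n-m) c) from fun s => Finset.prod_congr rfl
        (fun c _ => emb_lift hg hm hmn c)]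
  rw [Finset.prod_mul_distrib, Finset.prod_const, Dall]
  congr 2
  simp [Fintype.card_fun]

theorem card_filter_dvd_of_gt {g : F[X]} (hg : g ≠ 0) {n : ℕ} (hmn : n < g.natDegree) :
    (Finset.univ.filter (fun c : Fin n → F => g ∣ emb n c)) = ∅ := by
  rw [Finset.filter_eq_empty_iff]
  intro c _
  intro hdvd
  have := Polynomial.natDegree_le_of_dvd hdvd (emb_ne_zero n c)
  rw [emb_natDegree] at this
  omega


theorem pow_q_pow_dvd_iff {P : F[X]} (hm : P.Monic) (hirr : Irreducible P) {n : ℕ} (hn : 0 < n) :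
    P ∣ (X ^ Fintype.card F ^ n - X) ↔ P.natDegree ∣ n := by
  haveI := Fact.mk hirr
  set q := Fintype.card F with hq
  have hq1 : 1 < q := Fintype.one_lt_card
  set d := P.natDegree with hd
  have hd1 : 0 < d := hirr.natDegree_pos
  set K := AdjoinRoot P with hK
  set α : K := AdjoinRoot.root P with hα
  let pb : PowerBasis F K := AdjoinRoot.powerBasis hm.ne_zero
  haveI : Module.Finite F K := Module.Finite.of_basis pb.basis
  haveI : Fintype K := Module.fintypeOfFintype pb.basis
  have hpbdim : pb.dim = d := rfl
  have hcard : Fintype.card K = q ^ d := by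
    rw [Module.card_eq_pow_finrank (K := F) (V := K), pb.finrank, hpbdim]
  -- divisibility in terms of the root
  have hdvd_iff : P ∣ (X ^ q ^ n - X) ↔ α ^ q ^ n = α := by
    rw [← AdjoinRoot.mk_eq_zero, map_sub, map_pow, AdjoinRoot.mk_X, sub_eq_zero]
  rw [hdvd_iff]
  -- iterated Frobenius fixes everything at multiples of d
  have hfix : ∀ (m : ℕ) (x : K), x ^ q ^ (d * m) = x := by
    intro m x
    rw [pow_mul, ← hcard, FiniteField.pow_card_pow]
  constructor
  · -- forward: α ^ q ^ n = α → d ∣ n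
    intro hroot
    by_contra hnd
    have hr0 : n % d ≠ 0 := fun h => hnd (Nat.dvd_iff_mod_eq_zero.mpr h)
    set r := n % d with hr
    have hrd : r < d := Nat.mod_lt _ hd1
    -- α is fixed by q^r
    have hαr : α ^ q ^ r = α := by
      have h2 : α ^ q ^ (d * (n / d) + r) = α := by
        rw [show d * (n / d) + r = n from by
          have := Nat.div_add_mod n d; omega]
        exact hroot
      rwa [pow_add, pow_mul, hfix] at h2
    -- char facts
    obtain ⟨s, hp, hqs⟩ := FiniteField.card F (ringChar F)
    haveI := Fact.mk hp
    haveI : CharP K (ringChar F) :=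
      charP_of_injective_algebraMap (algebraMap F K).injective _
    have hfrob : ∀ x y : K, (x + y) ^ q ^ r = x ^ q ^ r + y ^ q ^ r := by
      intro x y
      rw [hq, hqs, ← pow_mul]
      exact add_pow_char_pow x y _ _
    have hall : ∀ x : K, x ^ q ^ r = x := by
      intro x
      obtain ⟨f, rfl⟩ := AdjoinRoot.mk_surjective x
      rw [← AdjoinRoot.aeval_eq]
      induction f using Polynomial.induction_on' with
      | add u w hu hw => rw [map_add, hfrob, hu, hw]
      | monomial k a =>
          rw [aeval_monomial, mul_pow, ← pow_mul, mul_comm k (q ^ r), pow_mul, hαr]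
          congr 1
          rw [← map_pow]
          congr 1
          exact FiniteField.pow_card_pow r a
    -- count roots
    have hne : ((X : K[X]) ^ (q ^ r) - X) ≠ 0 :=
      FiniteField.X_pow_card_sub_X_ne_zero K (Nat.one_lt_pow hr0 hq1)
    have hsub : (Finset.univ : Finset K) ⊆ ((X : K[X]) ^ (q ^ r) - X).roots.toFinset := by
      intro x _
      rw [Multiset.mem_toFinset, mem_roots hne]
      simp [IsRoot.def, sub_eq_zero, hall x]
    have hbig : Fintype.card K ≤ q ^ r := by
      calc Fintype.card K = (Finset.univ : Finset K).card := (Finset.card_univ).symm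
        _ ≤ ((X : K[X]) ^ (q ^ r) - X).roots.toFinset.card := Finset.card_le_card hsub
        _ ≤ Multiset.card ((X : K[X]) ^ (q ^ r) - X).roots := Multiset.toFinset_card_le _
        _ ≤ ((X : K[X]) ^ (q ^ r) - X).natDegree := card_roots' _
        _ = q ^ r := FiniteField.X_pow_card_sub_X_natDegree_eq K (Nat.one_lt_pow hr0 hq1)
    rw [hcard] at hbig
    have := Nat.pow_lt_pow_right hq1 hrd
    omega
  · -- reverse
    rintro ⟨m, rfl⟩
    exact hfix m α


theorem count_nf_iff {P f : F[X]} (hm : P.Monic) (hirr : Irreducible P) (hf : f ≠ 0) (k : ℕ) :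
    P ^ k ∣ f ↔ k ≤ (normalizedFactors f).count P := by
  rw [pow_dvd_iff_le_emultiplicity,
    emultiplicity_eq_count_normalizedFactors hirr hf, hm.normalize_eq_self, Nat.cast_le]

theorem count_nf_eq_card {P f : F[X]} (hm : P.Monic) (hirr : Irreducible P) {n : ℕ}
    (hf : f ≠ 0) (hdeg : f.natDegree = n) :
    (normalizedFactors f).count P = ((Icc 1 n).filter (fun k => P ^ k ∣ f)).card := by
  set t := (normalizedFactors f).count P with ht
  have hle : ∀ k, P ^ k ∣ f ↔ k ≤ t := fun k => count_nf_iff hm hirr hf k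
  have htn : t ≤ n := by
    have h1 : P ^ t ∣ f := (hle t).mpr le_rfl
    have h2 := Polynomial.natDegree_le_of_dvd h1 hf
    rw [natDegree_pow, hdeg] at h2
    have hd1 : 0 < P.natDegree := hirr.natDegree_pos
    calc t ≤ t * P.natDegree := Nat.le_mul_of_pos_right t hd1
      _ ≤ n := h2
  have hset : (Icc 1 n).filter (fun k => P ^ k ∣ f) = Icc 1 t := by
    ext k
    simp only [Finset.mem_filter, Finset.mem_Icc, hle k]
    omega
  rw [hset, Nat.card_Icc]; omega

theorem count_nf_finset_prod {ι : Type*} (s : Finset ι) (f : ι → F[X])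
    (hf : ∀ i ∈ s, f i ≠ 0) :
    normalizedFactors (∏ i ∈ s, f i) = ∑ i ∈ s, normalizedFactors (f i) := by
  induction s using Finset.cons_induction with
  | empty => simp [normalizedFactors_one]
  | cons a s ha ih =>
      rw [Finset.prod_cons, Finset.sum_cons,
        normalizedFactors_mul (hf a (Finset.mem_cons_self a s))
          (Finset.prod_ne_zero_iff.mpr (fun i hi => hf i (Finset.mem_cons_of_mem hi))),
        ih (fun i hi => hf i (Finset.mem_cons_of_mem hi))]

theorem count_nf_Dall {P : F[X]} (hm : P.Monic) (hirr : Irreducible P) (n : ℕ) :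
    (normalizedFactors (Dall F n)).count P
      = ∑ k ∈ Icc 1 n, if k * P.natDegree ≤ n
          then Fintype.card F ^ (n - k * P.natDegree) else 0 := by
  rw [Dall, count_nf_finset_prod _ _ (fun c _ => emb_ne_zero n c), Multiset.count_sum']
  rw [show ∀ s : Finset (Fin n → F), ∑ c ∈ s, ((normalizedFactors (emb n c)).count P)
      = ∑ c ∈ s, ((Icc 1 n).filter (fun k => P ^ k ∣ emb n c)).card from fun s =>
    Finset.sum_congr rfl fun c _ => count_nf_eq_card hm hirr (emb_ne_zero n c) (emb_natDegree n c)]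
  have hswap : ∑ c : Fin n → F, ((Icc 1 n).filter (fun k => P ^ k ∣ emb n c)).card
      = ∑ k ∈ Icc 1 n, (Finset.univ.filter (fun c : Fin n → F => P ^ k ∣ emb n c)).card := by
    simp only [Finset.card_filter]
    rw [Finset.sum_comm]
  rw [hswap]
  refine Finset.sum_congr rfl fun k hk => ?_
  by_cases h : k * P.natDegree ≤ n
  · rw [if_pos h, card_filter_dvd (hm.pow k) (by rw [natDegree_pow]) h]
  · rw [if_neg h, card_filter_dvd_of_gt (pow_ne_zero k hm.ne_zero)
      (by rw [natDegree_pow]; omega)]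
    simp


theorem Scount (q d n : ℕ) (hd : 0 < d) (hn : 0 < n) :
    (∑ k ∈ Icc 1 n, if k * d ≤ n then q ^ (n - k * d) else 0)
      = (if d ∣ n then 1 else 0)
        + q * ∑ k ∈ Icc 1 (n - 1), if k * d ≤ n - 1 then q ^ (n - 1 - k * d) else 0 := by
  have h1 : q * (∑ k ∈ Icc 1 (n - 1), if k * d ≤ n - 1 then q ^ (n - 1 - k * d) else 0)
      = ∑ k ∈ Icc 1 (n - 1), (if k * d ≤ n - 1 then q ^ (n - k * d) else 0) := by
    rw [Finset.mul_sum]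
    refine Finset.sum_congr rfl fun k hk => ?_
    by_cases h : k * d ≤ n - 1
    · rw [if_pos h, if_pos h, ← pow_succ']
      congr 1
      omega
    · simp [h]
  rw [h1]
  have h2 : ∑ k ∈ Icc 1 n, (if k * d ≤ n - 1 then q ^ (n - k * d) else 0)
      = ∑ k ∈ Icc 1 (n - 1), (if k * d ≤ n - 1 then q ^ (n - k * d) else 0) := by
    have hins : Icc 1 n = insert n (Icc 1 (n - 1)) := by
      ext x
      simp only [Finset.mem_insert, Finset.mem_Icc]
      omega
    rw [hins, Finset.sum_insert (by simp only [Finset.mem_Icc]; omega)]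
    rw [if_neg (show ¬ n * d ≤ n - 1 by
      have := Nat.le_mul_of_pos_right n hd; omega)]
    rw [zero_add]
  rw [← h2]
  have h3 : ∀ k ∈ Icc 1 n, (if k * d ≤ n then q ^ (n - k * d) else 0)
      = (if k * d = n then 1 else 0) + (if k * d ≤ n - 1 then q ^ (n - k * d) else 0) := by
    intro k hk
    rcases Nat.lt_trichotomy (k * d) n with h | h | h
    · rw [if_pos h.le, if_neg (by omega), if_pos (by omega), zero_add]
    · rw [if_pos h.le, if_pos h, if_neg (by omega), add_zero, h, Nat.sub_self, pow_zero]
    · rw [if_neg (by omega), if_neg (by omega), if_neg (by omega)]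
  rw [Finset.sum_congr rfl h3, Finset.sum_add_distrib]
  congr 1
  by_cases hdn : d ∣ n
  · obtain ⟨m, hmn⟩ := hdn
    have hm1 : 1 ≤ m := by
      rcases Nat.eq_zero_or_pos m with rfl | h
      · rw [mul_zero] at hmn; omega
      · exact h
    rw [if_pos ⟨m, hmn⟩, Finset.sum_eq_single m]
    · rw [if_pos (by rw [mul_comm]; omega)]
    · intro b _ hb
      rw [if_neg]
      intro hbd
      apply hb
      have hbm : b * d = m * d := by rw [mul_comm m d]; omega
      exact Nat.eq_of_mul_eq_mul_right hd hbm
    · intro hm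
      exfalso
      apply hm
      rw [Finset.mem_Icc]
      have := Nat.le_mul_of_pos_left m hd
      omega
  · rw [if_neg hdn, Finset.sum_eq_zero]
    intro k hk
    rw [if_neg]
    intro h
    exact hdn ⟨k, by rw [mul_comm]; omega⟩

theorem count_nf_W {P : F[X]} (hm : P.Monic) (hirr : Irreducible P) {n : ℕ} (hn : 0 < n) :
    (normalizedFactors ((X : F[X]) ^ Fintype.card F ^ n - X)).count P
      = if P.natDegree ∣ n then 1 else 0 := by
  set q := Fintype.card F with hq
  have hq1 : 1 < q := Fintype.one_lt_card
  have hW0 : ((X : F[X]) ^ q ^ n - X) ≠ 0 :=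
    FiniteField.X_pow_card_sub_X_ne_zero F (Nat.one_lt_pow hn.ne' hq1)
  have hsq : Squarefree ((X : F[X]) ^ q ^ n - X) := by
    obtain ⟨s, hp, hqs⟩ := FiniteField.card F (ringChar F)
    refine (galois_poly_separable (ringChar F) (q ^ n) ?_).squarefree
    rw [hq, hqs]
    exact dvd_pow (dvd_pow_self _ (by positivity)) (by positivity)
  have hnodup := (squarefree_iff_nodup_normalizedFactors hW0).mp hsq
  have hle1 : (normalizedFactors ((X : F[X]) ^ q ^ n - X)).count P ≤ 1 :=
    Multiset.nodup_iff_count_le_one.mp hnodup P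
  have hiff := count_nf_iff hm hirr hW0 1
  rw [pow_one] at hiff
  by_cases hdvd : P.natDegree ∣ n
  · rw [if_pos hdvd]
    have := hiff.mp ((pow_q_pow_dvd_iff hm hirr hn).mpr hdvd)
    omega
  · rw [if_neg hdvd]
    by_contra hne
    have : P ∣ (X : F[X]) ^ q ^ n - X := hiff.mpr (by omega)
    exact hdvd ((pow_q_pow_dvd_iff hm hirr hn).mp this)

theorem Dall_succ (n : ℕ) (hn : 0 < n) :
    Dall F n = ((X : F[X]) ^ Fintype.card F ^ n - X) * Dall F (n - 1) ^ Fintype.card F := by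
  set q := Fintype.card F with hq
  have hq1 : 1 < q := Fintype.one_lt_card
  have hW : ((X : F[X]) ^ q ^ n - X).Monic := by
    apply monic_X_pow_sub
    rw [degree_X]
    exact_mod_cast Nat.one_lt_pow hn.ne' hq1
  have hW0 : ((X : F[X]) ^ q ^ n - X) ≠ 0 := hW.ne_zero
  have hRm : (((X : F[X]) ^ q ^ n - X) * Dall F (n - 1) ^ q).Monic :=
    hW.mul ((Dall_monic (n - 1)).pow q)
  apply Polynomial.eq_of_monic_of_associated (Dall_monic n) hRm
  have hnf : normalizedFactors (Dall F n)
      = normalizedFactors (((X : F[X]) ^ q ^ n - X) * Dall F (n - 1) ^ q) := by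
    have hcount : ∀ P : F[X], P.Monic → Irreducible P →
        (normalizedFactors (Dall F n)).count P
          = (normalizedFactors (((X : F[X]) ^ q ^ n - X) * Dall F (n - 1) ^ q)).count P := by
      intro P hm hirr
      rw [normalizedFactors_mul hW0 (pow_ne_zero _ (Dall_ne_zero (n - 1))),
        normalizedFactors_pow, Multiset.count_add, Multiset.count_nsmul,
        count_nf_W hm hirr hn, count_nf_Dall hm hirr, count_nf_Dall hm hirr]
      exact Scount q P.natDegree n hirr.natDegree_pos hn
    ext P
    by_cases hP : P ∈ normalizedFactors (Dall F n)
        ∨ P ∈ normalizedFactors (((X : F[X]) ^ q ^ n - X) * Dall F (n - 1) ^ q)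
    · have hPprime : Prime P := by
        rcases hP with h | h
        · exact prime_of_normalized_factor P h
        · exact prime_of_normalized_factor P h
      have hPnorm : normalize P = P := by
        rcases hP with h | h
        · exact normalize_normalized_factor P h
        · exact normalize_normalized_factor P h
      have hPmonic : P.Monic := by
        have := Polynomial.monic_normalize (hPprime.ne_zero)
        rwa [hPnorm] at this
      exact hcount P hPmonic hPprime.irreducible
    · push_neg at hP
      rw [Multiset.count_eq_zero_of_notMem hP.1, Multiset.count_eq_zero_of_notMem hP.2]
  exact ((prod_normalizedFactors (Dall_ne_zero n)).symm.trans
    (hnf ▸ prod_normalizedFactors (hRm.ne_zero)))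


theorem W_monic {n : ℕ} (hn : 0 < n) : ((X : F[X]) ^ Fintype.card F ^ n - X).Monic := by
  apply monic_X_pow_sub
  rw [degree_X]
  exact_mod_cast Nat.one_lt_pow hn.ne' Fintype.one_lt_card

theorem Dv_eq_of_lt {v : F[X]} {n : ℕ} (hn : n < v.natDegree) :
    (∏ c ∈ Finset.univ.filter (fun c : Fin n → F => ¬ v ∣ emb n c), emb n c) = Dall F n := by
  rw [Dall, ← Finset.prod_filter_mul_prod_filter_not Finset.univ
    (fun c : Fin n → F => ¬ v ∣ emb n c) (emb n)]
  have : Finset.univ.filter (fun c : Fin n → F => ¬ ¬ v ∣ emb n c) = ∅ := by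
    rw [Finset.filter_eq_empty_iff]
    intro c _ hdvd
    rw [not_not] at hdvd
    have := Polynomial.natDegree_le_of_dvd hdvd (emb_ne_zero n c)
    rw [emb_natDegree] at this
    omega
  rw [this, Finset.prod_empty, mul_one]

theorem Dv_split {v : F[X]} (hv : v.Monic) {n : ℕ} (hn : v.natDegree ≤ n) :
    Dall F n = (∏ c ∈ Finset.univ.filter (fun c : Fin n → F => ¬ v ∣ emb n c), emb n c)
      * (v ^ (Fintype.card F ^ (n - v.natDegree)) * Dall F (n - v.natDegree)) := by
  rw [← prod_filter_dvd hv rfl hn]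
  rw [Dall, ← Finset.prod_filter_mul_prod_filter_not Finset.univ
    (fun c : Fin n → F => v ∣ emb n c) (emb n)]
  exact mul_comm _ _

theorem final_div {a b c e : F[X]} (hb : b ≠ 0) (he : e ≠ 0) (m : ℕ)
    (h : a * e = c * b ^ m) :
    algebraMap F[X] (RatFunc F) a / (algebraMap F[X] (RatFunc F) b) ^ m
      = algebraMap F[X] (RatFunc F) c / algebraMap F[X] (RatFunc F) e := by
  have hinj := IsFractionRing.injective F[X] (RatFunc F)
  have hbb : (algebraMap F[X] (RatFunc F) b) ^ m ≠ 0 :=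
    pow_ne_zero _ ((map_ne_zero_iff _ hinj).mpr hb)
  have hee : algebraMap F[X] (RatFunc F) e ≠ 0 := (map_ne_zero_iff _ hinj).mpr he
  rw [div_eq_div_iff hbb hee, ← map_pow, ← map_mul, ← map_mul, h]

theorem W_map (m : ℕ) :
    algebraMap F[X] (RatFunc F) ((X : F[X]) ^ m - X) = RatFunc.X ^ m - RatFunc.X := by
  rw [map_sub, map_pow, RatFunc.algebraMap_X]


end CarlitzDnv

open CarlitzDnv

open scoped Classical in
/-- Let `v` be monic irreducible of degree `d` in `𝔽_q[θ]`.  In the rational function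
field `𝔽_q(θ)`, the quotient `D_{n,v}/D_{n-1,v}^q` equals `(θ^{q^n} − θ)/(θ^{q^{n-d}} − θ)`
if `n > d`, equals `(θ^{q^n} − θ)/v` if `n = d`, and equals `θ^{q^n} − θ` if `0 < n < d`. -/
theorem Dnv_ratio (F : Type*) [Field F] [Fintype F]
    (q : ℕ) (hq : q = Fintype.card F)
    (v : F[X]) (hv : v.Monic) (hirr : Irreducible v)
    (d : ℕ) (hd : d = v.natDegree)
    (Dv : ℕ → F[X])
    (hDv : ∀ n, Dv n =
      ∏ c ∈ Finset.univ.filter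
          (fun c : Fin n → F => ¬ v ∣ ((X : F[X]) ^ n + ∑ j : Fin n, C (c j) * X ^ (j : ℕ))),
        ((X : F[X]) ^ n + ∑ j : Fin n, C (c j) * X ^ (j : ℕ)))
    (n : ℕ) :
    (d < n →
      algebraMap F[X] (RatFunc F) (Dv n) / (algebraMap F[X] (RatFunc F) (Dv (n - 1))) ^ q =
        (RatFunc.X ^ q ^ n - RatFunc.X) / (RatFunc.X ^ q ^ (n - d) - RatFunc.X)) ∧
    (n = d →
      algebraMap F[X] (RatFunc F) (Dv n) / (algebraMap F[X] (RatFunc F) (Dv (n - 1))) ^ q =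
        (RatFunc.X ^ q ^ n - RatFunc.X) / algebraMap F[X] (RatFunc F) v) ∧
    (0 < n → n < d →
      algebraMap F[X] (RatFunc F) (Dv n) / (algebraMap F[X] (RatFunc F) (Dv (n - 1))) ^ q =
        RatFunc.X ^ q ^ n - RatFunc.X) := by
  subst hq
  subst hd
  have hd1 : 0 < v.natDegree := hirr.natDegree_pos
  set q := Fintype.card F with hq
  set d := v.natDegree with hd
  have hDv' : ∀ m : ℕ, Dv m
      = ∏ c ∈ Finset.univ.filter (fun c : Fin m → F => ¬ v ∣ emb m c), emb m c := hDv
  have hDvne : ∀ m : ℕ, Dv m ≠ 0 := by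
    intro m
    rw [hDv' m]
    exact (monic_prod_of_monic _ _ fun c _ => emb_monic m c).ne_zero
  refine ⟨?_, ?_, ?_⟩
  · -- case d < n
    intro hdn
    have hn1 : 1 ≤ n := by omega
    have h1 : Dall F n = Dv n * (v ^ (q ^ (n - d)) * Dall F (n - d)) := by
      rw [hDv' n]; exact Dv_split hv (by omega)
    have h2 : Dall F (n - 1) = Dv (n - 1) * (v ^ (q ^ (n - 1 - d)) * Dall F (n - 1 - d)) := by
      rw [hDv' (n - 1)]; exact Dv_split hv (by omega)
    have h3 : Dall F n = ((X : F[X]) ^ q ^ n - X) * Dall F (n - 1) ^ q := Dall_succ n (by omega)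
    have h4 : Dall F (n - d) = ((X : F[X]) ^ q ^ (n - d) - X) * Dall F (n - 1 - d) ^ q := by
      have := Dall_succ (F := F) (n - d) (by omega)
      rwa [show n - d - 1 = n - 1 - d by omega] at this
    have hvpow : (v ^ (q ^ (n - 1 - d))) ^ q = v ^ (q ^ (n - d)) := by
      rw [← pow_mul]
      congr 1
      rw [← pow_succ]
      congr 1
      omega
    have hE : Dv n * (v ^ (q ^ (n - d)) * (((X : F[X]) ^ q ^ (n - d) - X) * Dall F (n - 1 - d) ^ q))
        = ((X : F[X]) ^ q ^ n - X) * (Dv (n - 1) * (v ^ (q ^ (n - 1 - d)) * Dall F (n - 1 - d))) ^ q := by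
      rw [← h4, ← h2, ← h1]
      exact h3
    have hE2 : (Dv n * ((X : F[X]) ^ q ^ (n - d) - X))
          * (v ^ (q ^ (n - d)) * Dall F (n - 1 - d) ^ q)
        = (((X : F[X]) ^ q ^ n - X) * Dv (n - 1) ^ q)
          * (v ^ (q ^ (n - d)) * Dall F (n - 1 - d) ^ q) := by
      calc (Dv n * ((X : F[X]) ^ q ^ (n - d) - X))
            * (v ^ (q ^ (n - d)) * Dall F (n - 1 - d) ^ q)
          = Dv n * (v ^ (q ^ (n - d)) * (((X : F[X]) ^ q ^ (n - d) - X)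
            * Dall F (n - 1 - d) ^ q)) := by ring
        _ = ((X : F[X]) ^ q ^ n - X)
            * (Dv (n - 1) * (v ^ (q ^ (n - 1 - d)) * Dall F (n - 1 - d))) ^ q := hE
        _ = (((X : F[X]) ^ q ^ n - X) * Dv (n - 1) ^ q)
            * ((v ^ (q ^ (n - 1 - d))) ^ q * Dall F (n - 1 - d) ^ q) := by ring
        _ = (((X : F[X]) ^ q ^ n - X) * Dv (n - 1) ^ q)
            * (v ^ (q ^ (n - d)) * Dall F (n - 1 - d) ^ q) := by rw [hvpow]
    have hkey : Dv n * ((X : F[X]) ^ q ^ (n - d) - X)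
        = ((X : F[X]) ^ q ^ n - X) * Dv (n - 1) ^ q :=
      mul_right_cancel₀ (mul_ne_zero (pow_ne_zero _ hv.ne_zero)
        (pow_ne_zero _ (Dall_ne_zero _))) hE2
    have := final_div (hDvne (n - 1)) (W_monic (F := F) (show 0 < n - d by omega)).ne_zero q hkey
    rw [this, W_map, W_map]
  · -- case n = d
    intro hnd
    subst hnd
    have h1 : Dall F d = Dv d * v := by
      have h := Dv_split (F := F) hv (le_refl v.natDegree)
      rw [← hd, ← hDv' d, Nat.sub_self, pow_zero, pow_one, Dall_zero, mul_one] at h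
      exact h
    have h2 : Dv (d - 1) = Dall F (d - 1) := by
      rw [hDv' (d - 1)]; exact Dv_eq_of_lt (by omega)
    have h3 := Dall_succ (F := F) d (by omega)
    have hkey : Dv d * v = ((X : F[X]) ^ q ^ d - X) * Dv (d - 1) ^ q := by
      rw [← h1, h3, h2]
    have := final_div (hDvne (d - 1)) hv.ne_zero q hkey
    rw [this, W_map]
  · -- case 0 < n < d
    intro hn hnd
    have h1 : Dv n = Dall F n := by
      rw [hDv' n]; exact Dv_eq_of_lt (by omega)
    have h2 : Dv (n - 1) = Dall F (n - 1) := by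
      rw [hDv' (n - 1)]; exact Dv_eq_of_lt (by omega)
    have hkey : Dv n * 1 = ((X : F[X]) ^ q ^ n - X) * Dv (n - 1) ^ q := by
      rw [mul_one, h1, h2]
      exact Dall_succ n hn
    have := final_div (hDvne (n - 1)) one_ne_zero q hkey
    rw [this, W_map, map_one, div_one]
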